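/- Let n ≥ 1 be an integer and define the n×n matrix A = (a_{i,j}) with entries in Z_{2n²+2} by a_{i,j} = (−1)^{i+j}·(j + (i−1)n) for 1 ≤ i,j ≤ n (that is, a_{i,j} = j + (i−1)n when i ≡ j (mod 2) and a_{i,j} = −(j + (i−1)n) otherwise). Then A is a globally simple NH_2(n;n): the multiset formed by all a_{i,j} and −a_{i,j} contains every element of Z_{2n²+2} ∖ {0, n²+1} exactly once, and for every row i the partial sums a_{i,1} + ⋯ + a_{i,k} (1 ≤ k ≤ n) are nonzero and pairwise distinct in Z_{2n²+2}, and for every column j the partial sums a_{1,j} + ⋯ + a_{k,j} (1 ≤ k ≤ n) are nonzero and pairwise distinct in Z_{2n²+2}. -/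
import Mathlib

lemma myIntCastZero {m : ℕ} {a : ℤ} (h : (a : ZMod m) = 0) (hb : a.natAbs < m) : a = 0 := by
  rw [ZMod.intCast_zmod_eq_zero_iff_dvd] at h
  exact Int.eq_zero_of_dvd_of_natAbs_lt_natAbs h (by simpa using hb)

lemma castEqInt {m : ℕ} {a b : ℤ} (h : (a : ZMod m) = (b : ZMod m))
    (hb : (a - b).natAbs < m) : a = b := by
  have h0 : ((a - b : ℤ) : ZMod m) = 0 := by push_cast; rw [h]; ring
  have := myIntCastZero h0 hb
  omega

-- injectivity of the labeling on the grid

lemma rowSumClosed (c : ℤ) (k : ℕ) :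
    ∑ j ∈ Finset.Icc 1 k, (-1:ℤ)^j * ((j:ℤ) + c)
      = (-1)^k * (((k:ℤ)+1)/2 + ((k:ℤ)%2)*c) := by
  induction k with
  | zero => simp
  | succ k ih =>
    rw [Finset.sum_Icc_succ_top (by omega : 1 ≤ k+1), ih]
    rcases Nat.even_or_odd k with ⟨t, ht⟩ | ⟨t, ht⟩
    · subst ht
      have h1 : ((-1:ℤ))^(t+t) = 1 := Even.neg_one_pow ⟨t, rfl⟩
      have h2 : ((-1:ℤ))^(t+t+1) = -1 := by rw [pow_succ, h1]; ring
      have e1 : (((t:ℤ)+t)+1)/2 = t := by omega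
      have e2 : (((t:ℤ)+t+1)+1)/2 = t+1 := by omega
      have e3 : ((t:ℤ)+t) % 2 = 0 := by omega
      have e4 : ((t:ℤ)+t+1) % 2 = 1 := by omega
      push_cast
      rw [h1, h2, e1, e2, e3, e4]
      ring
    · subst ht
      have h1 : ((-1:ℤ))^(2*t+1) = -1 := Odd.neg_one_pow ⟨t, by ring⟩
      have h2 : ((-1:ℤ))^(2*t+1+1) = 1 := by rw [pow_succ, h1]; ring
      have e1 : ((2*(t:ℤ)+1)+1)/2 = t+1 := by omega
      have e2 : ((2*(t:ℤ)+1+1)+1)/2 = t+1 := by omega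
      have e3 : (2*(t:ℤ)+1) % 2 = 1 := by omega
      have e4 : (2*(t:ℤ)+1+1) % 2 = 0 := by omega
      push_cast
      rw [h1, h2, e1, e2, e3, e4]
      ring

lemma colSumClosed (d e : ℤ) (k : ℕ) :
    ∑ i ∈ Finset.Icc 1 k, (-1:ℤ)^i * (d + ((i:ℤ) - 1) * e)
      = (-1)^k * (e * ((k:ℤ)/2) + ((k:ℤ)%2)*d) := by
  induction k with
  | zero => simp
  | succ k ih =>
    rw [Finset.sum_Icc_succ_top (by omega : 1 ≤ k+1), ih]
    rcases Nat.even_or_odd k with ⟨t, ht⟩ | ⟨t, ht⟩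
    · subst ht
      have h1 : ((-1:ℤ))^(t+t) = 1 := Even.neg_one_pow ⟨t, rfl⟩
      have h2 : ((-1:ℤ))^(t+t+1) = -1 := by rw [pow_succ, h1]; ring
      have e1 : ((t:ℤ)+t)/2 = t := by omega
      have e2 : ((t:ℤ)+t+1)/2 = t := by omega
      have e3 : ((t:ℤ)+t) % 2 = 0 := by omega
      have e4 : ((t:ℤ)+t+1) % 2 = 1 := by omega
      push_cast
      rw [h1, h2, e1, e2, e3, e4]
      ring
    · subst ht
      have h1 : ((-1:ℤ))^(2*t+1) = -1 := Odd.neg_one_pow ⟨t, by ring⟩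
      have h2 : ((-1:ℤ))^(2*t+1+1) = 1 := by rw [pow_succ, h1]; ring
      have e1 : (2*(t:ℤ)+1)/2 = t := by omega
      have e2 : (2*(t:ℤ)+1+1)/2 = t+1 := by omega
      have e3 : (2*(t:ℤ)+1) % 2 = 1 := by omega
      have e4 : (2*(t:ℤ)+1+1) % 2 = 0 := by omega
      push_cast
      rw [h1, h2, e1, e2, e3, e4]
      ring

lemma keyNe {m : ℕ} {N : ℤ} (hm : (m:ℤ) = 2*N+2) (k : ℕ) {g : ℤ}
    (hg1 : 1 ≤ g) (hg2 : g ≤ N) : ((((-1)^k * g : ℤ)) : ZMod m) ≠ 0 := by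
  intro h
  have hz : ((-1:ℤ)^k * g) = 0 := myIntCastZero h (by
    rcases Nat.even_or_odd k with he | ho
    · rw [he.neg_one_pow, one_mul]; omega
    · rw [ho.neg_one_pow]; omega)
  rcases Nat.even_or_odd k with he | ho
  · rw [he.neg_one_pow, one_mul] at hz; omega
  · rw [ho.neg_one_pow] at hz; omega

lemma keyInj {m : ℕ} {N : ℤ} (hm : (m:ℤ) = 2*N+2) (k k' : ℕ) {a b : ℤ}
    (ha1 : 1 ≤ a) (ha2 : a ≤ N) (hb1 : 1 ≤ b) (hb2 : b ≤ N)
    (h : ((((-1)^k * a : ℤ)) : ZMod m) = (((-1)^k' * b : ℤ))) :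
    (k : ℤ) % 2 = (k' : ℤ) % 2 ∧ a = b := by
  have h0 : ((((-1:ℤ)^k * a - (-1)^k' * b : ℤ)) : ZMod m) = 0 := by
    push_cast at h ⊢; rw [h]; ring
  rcases Nat.even_or_odd k with he | ho <;> rcases Nat.even_or_odd k' with he' | ho'
  · rw [he.neg_one_pow, he'.neg_one_pow, one_mul, one_mul] at h0
    have := myIntCastZero h0 (by omega)
    have hk := Nat.even_iff.mp he; have hk' := Nat.even_iff.mp he'
    constructor <;> omega
  · rw [he.neg_one_pow, ho'.neg_one_pow, one_mul] at h0
    have h0' : (((a + b : ℤ)) : ZMod m) = 0 := by push_cast at h0 ⊢; linear_combination h0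
    have := myIntCastZero h0' (by omega)
    omega
  · rw [ho.neg_one_pow, he'.neg_one_pow, one_mul] at h0
    have h0' : (((a + b : ℤ)) : ZMod m) = 0 := by push_cast at h0 ⊢; linear_combination -h0
    have := myIntCastZero h0' (by omega)
    omega
  · rw [ho.neg_one_pow, ho'.neg_one_pow] at h0
    have h0' : (((b - a : ℤ)) : ZMod m) = 0 := by push_cast at h0 ⊢; linear_combination h0
    have := myIntCastZero h0' (by omega)
    have hk := Nat.odd_iff.mp ho; have hk' := Nat.odd_iff.mp ho'
    constructor <;> omega

lemma stripSignNe {m : ℕ} (i : ℕ) (X : ℤ) (h : (((-1)^i * X : ℤ) : ZMod m) = 0) :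
    ((X : ℤ) : ZMod m) = 0 := by
  rcases Nat.even_or_odd i with he | ho
  · rwa [he.neg_one_pow, one_mul] at h
  · rw [ho.neg_one_pow, neg_one_mul, Int.cast_neg, neg_eq_zero] at h; exact h

lemma stripSignEq {m : ℕ} (i : ℕ) (X Y : ℤ)
    (h : (((-1)^i * X : ℤ) : ZMod m) = (((-1)^i * Y : ℤ) : ZMod m)) :
    ((X : ℤ) : ZMod m) = ((Y : ℤ) : ZMod m) := by
  rcases Nat.even_or_odd i with he | ho
  · rwa [he.neg_one_pow, one_mul, one_mul] at h
  · rw [ho.neg_one_pow, neg_one_mul, neg_one_mul, Int.cast_neg, Int.cast_neg, neg_inj] at h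
    exact h

lemma gridInj (n : ℕ) {i j i' j' : ℕ} (hi : 1 ≤ i ∧ i ≤ n) (hj : 1 ≤ j ∧ j ≤ n)
    (hi' : 1 ≤ i' ∧ i' ≤ n) (hj' : 1 ≤ j' ∧ j' ≤ n)
    (h : (j:ℤ) + ((i:ℤ)-1)*n = (j':ℤ) + ((i':ℤ)-1)*n) : i = i' ∧ j = j' := by
  have hj1 : (1:ℤ) ≤ (j:ℤ) := by exact_mod_cast hj.1
  have hj2 : (j:ℤ) ≤ (n:ℤ) := by exact_mod_cast hj.2
  have hj1' : (1:ℤ) ≤ (j':ℤ) := by exact_mod_cast hj'.1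
  have hj2' : (j':ℤ) ≤ (n:ℤ) := by exact_mod_cast hj'.2
  have hii : i = i' := by
    by_contra hne
    rcases Nat.lt_or_ge i i' with hlt | hge
    · have h1 : (i:ℤ) + 1 ≤ (i':ℤ) := by exact_mod_cast hlt
      have key : 0 ≤ ((i':ℤ) - i - 1) * n := mul_nonneg (by linarith) (by positivity)
      have expand : ((i':ℤ) - i) * n = ((i':ℤ) - i - 1)*n + n := by ring
      have hdiff : (j:ℤ) - j' = ((i':ℤ) - i) * n := by linarith [h]
      have hnn : (1:ℤ) ≤ (n:ℤ) := by linarith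
      linarith
    · have hlt : i' < i := by omega
      have h1 : (i':ℤ) + 1 ≤ (i:ℤ) := by exact_mod_cast hlt
      have key : 0 ≤ ((i:ℤ) - i' - 1) * n := mul_nonneg (by linarith) (by positivity)
      have expand : ((i:ℤ) - i') * n = ((i:ℤ) - i' - 1)*n + n := by ring
      have hdiff : (j':ℤ) - j = ((i:ℤ) - i') * n := by linarith [h]
      have hnn : (1:ℤ) ≤ (n:ℤ) := by linarith
      linarith
  refine ⟨hii, ?_⟩
  subst hii
  have : (j:ℤ) = (j':ℤ) := by linarith
  exact_mod_cast this

lemma auxCount (n : ℕ) (hn : 1 ≤ n) (A : ℕ → ℕ → ZMod (2 * n ^ 2 + 2))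
    (hA : ∀ i ∈ Finset.Icc 1 n, ∀ j ∈ Finset.Icc 1 n,
      A i j = (((-1) ^ (i + j) * ((j : ℤ) + ((i : ℤ) - 1) * n) : ℤ) : ZMod (2 * n ^ 2 + 2))) :
    (∀ x : ZMod (2 * n ^ 2 + 2),
      (x = 0 ∨ x = ((n ^ 2 + 1 : ℕ) : ZMod (2 * n ^ 2 + 2))) →
      Multiset.count x
        (((Finset.Icc 1 n ×ˢ Finset.Icc 1 n).val).bind
          (fun p => ({A p.1 p.2, -A p.1 p.2} : Multiset (ZMod (2 * n ^ 2 + 2))))) = 0) ∧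
    (∀ x : ZMod (2 * n ^ 2 + 2),
      ¬(x = 0 ∨ x = ((n ^ 2 + 1 : ℕ) : ZMod (2 * n ^ 2 + 2))) →
      Multiset.count x
        (((Finset.Icc 1 n ×ˢ Finset.Icc 1 n).val).bind
          (fun p => ({A p.1 p.2, -A p.1 p.2} : Multiset (ZMod (2 * n ^ 2 + 2))))) = 1) := by
  haveI : NeZero (2*n^2+2) := ⟨by omega⟩
  have hn' : (1:ℤ) ≤ (n:ℤ) := by exact_mod_cast hn
  have hN : (n:ℤ) ≤ (n:ℤ)^2 := by nlinarith
  have hb1 : ((n^2 : ℕ) : ℤ) = (n:ℤ)^2 := by push_cast; ring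
  have hb2 : n^2 = n*n := by ring
  have hJ : ((n ^ 2 + 1 : ℕ) : ZMod (2*n^2+2)) = (((n:ℤ)^2+1 : ℤ) : ZMod (2*n^2+2)) := by
    push_cast; ring
  -- bounds for grid values
  have hwb : ∀ p : ℕ × ℕ, p ∈ Finset.Icc 1 n ×ˢ Finset.Icc 1 n →
      1 ≤ (p.2:ℤ) + ((p.1:ℤ)-1)*n ∧ (p.2:ℤ) + ((p.1:ℤ)-1)*n ≤ (n:ℤ)^2 := by
    intro p hp
    rw [Finset.mem_product, Finset.mem_Icc, Finset.mem_Icc] at hp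
    have h11 : (1:ℤ) ≤ (p.1:ℤ) := by exact_mod_cast hp.1.1
    have h12 : (p.1:ℤ) ≤ (n:ℤ) := by exact_mod_cast hp.1.2
    have h21 : (1:ℤ) ≤ (p.2:ℤ) := by exact_mod_cast hp.2.1
    have h22 : (p.2:ℤ) ≤ (n:ℤ) := by exact_mod_cast hp.2.2
    have hc0 : 0 ≤ ((p.1:ℤ)-1)*n := mul_nonneg (by linarith) (by linarith)
    have hc1 : ((p.1:ℤ)-1)*n ≤ ((n:ℤ)-1)*n :=
      mul_le_mul_of_nonneg_right (by linarith) (by linarith)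
    constructor
    · linarith
    · nlinarith
  -- rewrite each pair
  have hpair : ∀ p ∈ (Finset.Icc 1 n ×ˢ Finset.Icc 1 n).val,
      ({A p.1 p.2, -A p.1 p.2} : Multiset (ZMod (2*n^2+2)))
        = {(((p.2:ℤ) + ((p.1:ℤ)-1)*n : ℤ) : ZMod (2*n^2+2)),
           -(((p.2:ℤ) + ((p.1:ℤ)-1)*n : ℤ) : ZMod (2*n^2+2))} := by
    intro p hp
    rw [Finset.mem_val, Finset.mem_product] at hp
    rw [hA p.1 hp.1 p.2 hp.2]
    rcases Nat.even_or_odd (p.1 + p.2) with he | ho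
    · rw [he.neg_one_pow, one_mul]
    · rw [ho.neg_one_pow, neg_one_mul, Int.cast_neg, neg_neg]
      exact Multiset.pair_comm _ _
  have hcount : ∀ x : ZMod (2*n^2+2), Multiset.count x
        (((Finset.Icc 1 n ×ˢ Finset.Icc 1 n).val).bind
          (fun p => ({A p.1 p.2, -A p.1 p.2} : Multiset (ZMod (2 * n ^ 2 + 2)))))
      = ∑ p ∈ Finset.Icc 1 n ×ˢ Finset.Icc 1 n,
          Multiset.count x
            ({(((p.2:ℤ) + ((p.1:ℤ)-1)*n : ℤ) : ZMod (2*n^2+2)),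
              -(((p.2:ℤ) + ((p.1:ℤ)-1)*n : ℤ) : ZMod (2*n^2+2))} : Multiset _) := by
    intro x
    rw [Multiset.bind_congr hpair, Multiset.count_bind]
    rfl
  constructor
  · -- count zero for x ∈ {0, J}
    intro x hx
    rw [hcount]
    apply Finset.sum_eq_zero
    intro p hp
    obtain ⟨hw1, hw2⟩ := hwb p hp
    obtain ⟨v, hv⟩ : ∃ v : ℤ, (p.2:ℤ) + ((p.1:ℤ)-1)*n = v := ⟨_, rfl⟩
    rw [hv] at hw1 hw2
    rw [Multiset.count_eq_zero]
    simp only [Multiset.insert_eq_cons, Multiset.mem_cons, Multiset.mem_singleton, hv]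
    push_neg
    rcases hx with rfl | rfl
    · constructor
      · intro h
        rw [show (0 : ZMod (2*n^2+2)) = ((0:ℤ) : ZMod (2*n^2+2)) by simp] at h
        have := castEqInt h (by omega)
        omega
      · intro h
        rw [show (0 : ZMod (2*n^2+2)) = ((0:ℤ) : ZMod (2*n^2+2)) by simp,
          ← Int.cast_neg] at h
        have := castEqInt h (by omega)
        omega
    · constructor
      · intro h
        rw [hJ] at h
        have := castEqInt h (by omega)
        omega
      · intro h
        rw [hJ, ← Int.cast_neg] at h
        have := castEqInt h (by omega)
        omega
  · -- count one
    intro x hx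
    push_neg at hx
    rw [hcount]
    set t := x.val with htdef
    have ht : t < 2*n^2+2 := ZMod.val_lt x
    have ht0 : t ≠ 0 := fun h => hx.1 ((ZMod.val_eq_zero x).mp h)
    have hxt : ((t : ℕ) : ZMod (2*n^2+2)) = x := ZMod.natCast_rightInverse x
    have htJ : t ≠ n^2+1 := by
      intro h
      apply hx.2
      rw [← hxt, h]
    -- choose v₀ and the representation of x
    obtain ⟨v₀, hv1, hv2, hxv⟩ : ∃ v₀ : ℕ, 1 ≤ v₀ ∧ v₀ ≤ n^2 ∧
        (x = ((v₀:ℤ) : ZMod (2*n^2+2)) ∨ x = -((v₀:ℤ) : ZMod (2*n^2+2))) := by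
      by_cases hc : t ≤ n^2
      · exact ⟨t, by omega, hc, Or.inl (by rw [← hxt]; push_cast; ring)⟩
      · refine ⟨2*n^2+2 - t, by omega, by omega, Or.inr ?_⟩
        have hmz : (((2*n^2+2 : ℕ) : ℤ) : ZMod (2*n^2+2)) = 0 := by
          rw [ZMod.intCast_zmod_eq_zero_iff_dvd]
        have : (((2*n^2+2 - t : ℕ) : ℤ) : ZMod (2*n^2+2))
            = (((2*n^2+2 : ℕ) : ℤ) : ZMod (2*n^2+2)) - (((t:ℕ):ℤ) : ZMod (2*n^2+2)) := by
          have hcast : ((2*n^2+2 - t : ℕ) : ℤ) = ((2*n^2+2 : ℕ) : ℤ) - ((t:ℕ):ℤ) := by omega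
          rw [hcast, Int.cast_sub]
        rw [this, hmz]
        rw [show ((((t:ℕ):ℤ)) : ZMod (2*n^2+2)) = x by push_cast; rw [hxt]]
        ring
    have hv2' : (v₀:ℤ) ≤ (n:ℤ)^2 := by omega
    have hv1' : (1:ℤ) ≤ (v₀:ℤ) := by exact_mod_cast hv1
    -- the unique preimage
    set p₀ : ℕ × ℕ := ((v₀-1)/n + 1, (v₀-1)%n + 1) with hp₀def
    have hdivlt : (v₀-1)/n < n := (Nat.div_lt_iff_lt_mul (by omega)).mpr (by omega)
    have hmodlt : (v₀-1)%n < n := Nat.mod_lt _ (by omega)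
    have hp₀i : 1 ≤ p₀.1 ∧ p₀.1 ≤ n := ⟨Nat.le_add_left 1 _, hdivlt⟩
    have hp₀j : 1 ≤ p₀.2 ∧ p₀.2 ≤ n := ⟨Nat.le_add_left 1 _, hmodlt⟩
    have hp₀mem : p₀ ∈ Finset.Icc 1 n ×ˢ Finset.Icc 1 n := by
      rw [Finset.mem_product, Finset.mem_Icc, Finset.mem_Icc]
      exact ⟨hp₀i, hp₀j⟩
    have hw₀ : (p₀.2:ℤ) + ((p₀.1:ℤ)-1)*n = (v₀:ℤ) := by
      have hnat : (v₀-1)%n + ((v₀-1)/n)*n + 1 = v₀ := by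
        rw [Nat.mod_add_div']; omega
      have := congrArg (fun z : ℕ => (z : ℤ)) hnat
      push_cast at this
      simp only [hp₀def]
      push_cast
      linarith
    rw [Finset.sum_eq_single_of_mem p₀ hp₀mem]
    · -- count at p₀ is 1
      rw [hw₀]
      have hne : ((v₀:ℤ) : ZMod (2*n^2+2)) ≠ -((v₀:ℤ) : ZMod (2*n^2+2)) := by
        intro h
        rw [← Int.cast_neg] at h
        have := castEqInt h (by omega)
        omega
      have hne' : ¬(-(((v₀:ℤ)) : ZMod (2*n^2+2)) = ((v₀:ℤ) : ZMod (2*n^2+2))) :=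
        fun h => hne h.symm
      rcases hxv with rfl | rfl
      · rw [Multiset.insert_eq_cons, Multiset.count_cons_self, Multiset.count_singleton,
          if_neg hne]
      · rw [Multiset.insert_eq_cons, Multiset.count_cons_of_ne hne', Multiset.count_singleton,
          if_pos rfl]
    · -- all other grid points contribute 0
      intro p hp hpne
      obtain ⟨hw1, hw2⟩ := hwb p hp
      rw [Finset.mem_product, Finset.mem_Icc, Finset.mem_Icc] at hp
      have hinj : (p.2:ℤ) + ((p.1:ℤ)-1)*n ≠ (v₀:ℤ) := by
        intro h
        rw [← hw₀] at h
        obtain ⟨e1, e2⟩ := gridInj n hp.1 hp.2 hp₀i hp₀j h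
        exact hpne (Prod.ext e1 e2)
      obtain ⟨v, hv⟩ : ∃ v : ℤ, (p.2:ℤ) + ((p.1:ℤ)-1)*n = v := ⟨_, rfl⟩
      rw [hv] at hw1 hw2 hinj
      rw [Multiset.count_eq_zero]
      simp only [Multiset.insert_eq_cons, Multiset.mem_cons, Multiset.mem_singleton, hv]
      push_neg
      rcases hxv with rfl | rfl
      · constructor
        · intro h
          exact hinj (castEqInt h (by omega)).symm
        · intro h
          rw [← Int.cast_neg] at h
          have := castEqInt h (by omega)
          omega
      · constructor
        · intro h
          rw [← Int.cast_neg] at h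
          have := castEqInt h (by omega)
          omega
        · intro h
          rw [← Int.cast_neg, ← Int.cast_neg] at h
          have := castEqInt h (by omega)
          exact hinj (by omega)

lemma auxRow (n : ℕ) (hn : 1 ≤ n) (A : ℕ → ℕ → ZMod (2 * n ^ 2 + 2))
    (hA : ∀ i ∈ Finset.Icc 1 n, ∀ j ∈ Finset.Icc 1 n,
      A i j = (((-1) ^ (i + j) * ((j : ℤ) + ((i : ℤ) - 1) * n) : ℤ) : ZMod (2 * n ^ 2 + 2))) :
    (∀ i ∈ Finset.Icc 1 n, ∀ k ∈ Finset.Icc 1 n,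
      (∑ j ∈ Finset.Icc 1 k, A i j) ≠ 0) ∧
    (∀ i ∈ Finset.Icc 1 n, ∀ k ∈ Finset.Icc 1 n, ∀ k' ∈ Finset.Icc 1 n,
      (∑ j ∈ Finset.Icc 1 k, A i j) = (∑ j ∈ Finset.Icc 1 k', A i j) → k = k') := by
  have hm : ((2*n^2+2 : ℕ) : ℤ) = 2*((n:ℤ)^2)+2 := by push_cast; ring
  have hn' : (1:ℤ) ≤ (n:ℤ) := by exact_mod_cast hn
  have hN : (n:ℤ) ≤ (n:ℤ)^2 := by nlinarith
  -- row machinery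
  have hrow : ∀ i, i ∈ Finset.Icc 1 n → ∀ k, k ≤ n →
      (∑ j ∈ Finset.Icc 1 k, A i j)
        = ((((-1)^i * ((-1)^k * (((k:ℤ)+1)/2 + ((k:ℤ)%2)*(((i:ℤ)-1)*n))) : ℤ))
            : ZMod (2*n^2+2)) := by
    intro i hi k hk
    have step : ∀ j ∈ Finset.Icc 1 k, A i j
        = (((-1) ^ (i + j) * ((j : ℤ) + ((i : ℤ) - 1) * n) : ℤ) : ZMod (2 * n ^ 2 + 2)) := by
      intro j hj
      rw [Finset.mem_Icc] at hj
      exact hA i hi j (Finset.mem_Icc.mpr ⟨hj.1, le_trans hj.2 hk⟩)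
    rw [Finset.sum_congr rfl step, ← Int.cast_sum]
    congr 1
    rw [← rowSumClosed (((i:ℤ)-1)*n) k, Finset.mul_sum]
    apply Finset.sum_congr rfl
    intro j hj
    rw [pow_add]; ring
  have hgb : ∀ i, i ∈ Finset.Icc 1 n → ∀ k, k ∈ Finset.Icc 1 n →
      1 ≤ (((k:ℤ)+1)/2 + ((k:ℤ)%2)*(((i:ℤ)-1)*n)) ∧
      (((k:ℤ)+1)/2 + ((k:ℤ)%2)*(((i:ℤ)-1)*n)) ≤ (n:ℤ)^2 := by
    intro i hi k hk
    rw [Finset.mem_Icc] at hi hk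
    have hi1 : (1:ℤ) ≤ (i:ℤ) := by exact_mod_cast hi.1
    have hi2 : (i:ℤ) ≤ (n:ℤ) := by exact_mod_cast hi.2
    have hk1 : (1:ℤ) ≤ (k:ℤ) := by exact_mod_cast hk.1
    have hk2 : (k:ℤ) ≤ (n:ℤ) := by exact_mod_cast hk.2
    have hc0 : 0 ≤ ((i:ℤ)-1)*n := mul_nonneg (by linarith) (by linarith)
    have hc1 : ((i:ℤ)-1)*n ≤ ((n:ℤ)-1)*n :=
      mul_le_mul_of_nonneg_right (by linarith) (by linarith)
    have hm0 : 0 ≤ ((k:ℤ)%2)*(((i:ℤ)-1)*n) := mul_nonneg (by omega) hc0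
    have hm1 : ((k:ℤ)%2)*(((i:ℤ)-1)*n) ≤ 1*(((i:ℤ)-1)*n) :=
      mul_le_mul_of_nonneg_right (by omega) hc0
    have hd1 : 1 ≤ ((k:ℤ)+1)/2 := by omega
    have hd2 : ((k:ℤ)+1)/2 ≤ (n:ℤ) := by omega
    constructor
    · linarith
    · nlinarith
  constructor
  · intro i hi k hk h
    rw [hrow i hi k (Finset.mem_Icc.mp hk).2] at h
    obtain ⟨h1, h2⟩ := hgb i hi k hk
    exact keyNe hm k h1 h2 (stripSignNe i _ h)
  · intro i hi k hk k' hk' h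
    rw [hrow i hi k (Finset.mem_Icc.mp hk).2, hrow i hi k' (Finset.mem_Icc.mp hk').2] at h
    obtain ⟨h1, h2⟩ := hgb i hi k hk
    obtain ⟨h1', h2'⟩ := hgb i hi k' hk'
    obtain ⟨hpar, heq⟩ := keyInj hm k k' h1 h2 h1' h2' (stripSignEq i _ _ h)
    rw [hpar] at heq
    have : ((k:ℤ)+1)/2 = ((k':ℤ)+1)/2 := by linarith
    omega

lemma auxCol (n : ℕ) (hn : 1 ≤ n) (A : ℕ → ℕ → ZMod (2 * n ^ 2 + 2))
    (hA : ∀ i ∈ Finset.Icc 1 n, ∀ j ∈ Finset.Icc 1 n,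
      A i j = (((-1) ^ (i + j) * ((j : ℤ) + ((i : ℤ) - 1) * n) : ℤ) : ZMod (2 * n ^ 2 + 2))) :
    (∀ j ∈ Finset.Icc 1 n, ∀ k ∈ Finset.Icc 1 n,
      (∑ i ∈ Finset.Icc 1 k, A i j) ≠ 0) ∧
    (∀ j ∈ Finset.Icc 1 n, ∀ k ∈ Finset.Icc 1 n, ∀ k' ∈ Finset.Icc 1 n,
      (∑ i ∈ Finset.Icc 1 k, A i j) = (∑ i ∈ Finset.Icc 1 k', A i j) → k = k') := by
  have hm : ((2*n^2+2 : ℕ) : ℤ) = 2*((n:ℤ)^2)+2 := by push_cast; ring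
  have hn' : (1:ℤ) ≤ (n:ℤ) := by exact_mod_cast hn
  have hN : (n:ℤ) ≤ (n:ℤ)^2 := by nlinarith
  have hcol : ∀ j, j ∈ Finset.Icc 1 n → ∀ k, k ≤ n →
      (∑ i ∈ Finset.Icc 1 k, A i j)
        = ((((-1)^j * ((-1)^k * ((n:ℤ) * ((k:ℤ)/2) + ((k:ℤ)%2)*(j:ℤ))) : ℤ))
            : ZMod (2*n^2+2)) := by
    intro j hj k hk
    have step : ∀ i ∈ Finset.Icc 1 k, A i j
        = (((-1) ^ (i + j) * ((j : ℤ) + ((i : ℤ) - 1) * n) : ℤ) : ZMod (2 * n ^ 2 + 2)) := by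
      intro i hi
      rw [Finset.mem_Icc] at hi
      exact hA i (Finset.mem_Icc.mpr ⟨hi.1, le_trans hi.2 hk⟩) j hj
    rw [Finset.sum_congr rfl step, ← Int.cast_sum]
    congr 1
    rw [← colSumClosed (j:ℤ) (n:ℤ) k, Finset.mul_sum]
    apply Finset.sum_congr rfl
    intro i hi
    rw [pow_add]; ring
  have hgb : ∀ j, j ∈ Finset.Icc 1 n → ∀ k, k ∈ Finset.Icc 1 n →
      1 ≤ ((n:ℤ) * ((k:ℤ)/2) + ((k:ℤ)%2)*(j:ℤ)) ∧
      ((n:ℤ) * ((k:ℤ)/2) + ((k:ℤ)%2)*(j:ℤ)) ≤ (n:ℤ)^2 := by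
    intro j hj k hk
    rw [Finset.mem_Icc] at hj hk
    have hj1 : (1:ℤ) ≤ (j:ℤ) := by exact_mod_cast hj.1
    have hj2 : (j:ℤ) ≤ (n:ℤ) := by exact_mod_cast hj.2
    have hk1 : (1:ℤ) ≤ (k:ℤ) := by exact_mod_cast hk.1
    have hk2 : (k:ℤ) ≤ (n:ℤ) := by exact_mod_cast hk.2
    rcases Nat.even_or_odd k with he | ho
    · have hke : (k:ℤ) % 2 = 0 := by
        have := Nat.even_iff.mp he; omega
      have e1 : 2 * ((k:ℤ)/2) = (k:ℤ) := by omega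
      have ht1 : (1:ℤ) ≤ (k:ℤ)/2 := by omega
      have h1 : (n:ℤ)*1 ≤ (n:ℤ)*((k:ℤ)/2) := mul_le_mul_of_nonneg_left ht1 (by linarith)
      have h2 : (n:ℤ)*(2*((k:ℤ)/2)) ≤ (n:ℤ)*(n:ℤ) := by
        apply mul_le_mul_of_nonneg_left _ (by linarith)
        omega
      rw [hke]
      constructor
      · nlinarith
      · nlinarith
    · have hko : (k:ℤ) % 2 = 1 := by
        have := Nat.odd_iff.mp ho; omega
      have ht0 : (0:ℤ) ≤ (k:ℤ)/2 := by omega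
      have h0 : 0 ≤ (n:ℤ)*((k:ℤ)/2) := mul_nonneg (by linarith) ht0
      have h2 : (n:ℤ)*(2*((k:ℤ)/2)) ≤ (n:ℤ)*((n:ℤ)-1) := by
        apply mul_le_mul_of_nonneg_left _ (by linarith)
        omega
      rw [hko]
      constructor
      · linarith
      · nlinarith
  constructor
  · intro j hj k hk h
    rw [hcol j hj k (Finset.mem_Icc.mp hk).2] at h
    obtain ⟨h1, h2⟩ := hgb j hj k hk
    exact keyNe hm k h1 h2 (stripSignNe j _ h)
  · intro j hj k hk k' hk' h
    rw [hcol j hj k (Finset.mem_Icc.mp hk).2, hcol j hj k' (Finset.mem_Icc.mp hk').2] at h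
    obtain ⟨h1, h2⟩ := hgb j hj k hk
    obtain ⟨h1', h2'⟩ := hgb j hj k' hk'
    obtain ⟨hpar, heq⟩ := keyInj hm k k' h1 h2 h1' h2' (stripSignEq j _ _ h)
    rw [hpar] at heq
    have hnz : (n:ℤ) ≠ 0 := by linarith
    have : (n:ℤ) * ((k:ℤ)/2) = (n:ℤ) * ((k':ℤ)/2) := by linarith
    have := mul_left_cancel₀ hnz this
    omega



/-- Proposition 3.2 (explicit form): the matrix a_{i,j} = (−1)^{i+j}·(j + (i−1)n)
over Z_{2n²+2} is a globally simple NH₂(n;n): the entries together with their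
negatives cover Z_{2n²+2} ∖ {0, n²+1} exactly once, and all natural partial sums of
every row and column are nonzero and pairwise distinct. -/
theorem stmt3 (n : ℕ) (hn : 1 ≤ n) (A : ℕ → ℕ → ZMod (2 * n ^ 2 + 2))
    (hA : ∀ i ∈ Finset.Icc 1 n, ∀ j ∈ Finset.Icc 1 n,
      A i j = (((-1) ^ (i + j) * ((j : ℤ) + ((i : ℤ) - 1) * n) : ℤ) : ZMod (2 * n ^ 2 + 2))) :
    (∀ x : ZMod (2 * n ^ 2 + 2),
      (x = 0 ∨ x = ((n ^ 2 + 1 : ℕ) : ZMod (2 * n ^ 2 + 2))) →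
      Multiset.count x
        (((Finset.Icc 1 n ×ˢ Finset.Icc 1 n).val).bind
          (fun p => ({A p.1 p.2, -A p.1 p.2} : Multiset (ZMod (2 * n ^ 2 + 2))))) = 0) ∧
    (∀ x : ZMod (2 * n ^ 2 + 2),
      ¬(x = 0 ∨ x = ((n ^ 2 + 1 : ℕ) : ZMod (2 * n ^ 2 + 2))) →
      Multiset.count x
        (((Finset.Icc 1 n ×ˢ Finset.Icc 1 n).val).bind
          (fun p => ({A p.1 p.2, -A p.1 p.2} : Multiset (ZMod (2 * n ^ 2 + 2))))) = 1) ∧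
    (∀ i ∈ Finset.Icc 1 n, ∀ k ∈ Finset.Icc 1 n,
      (∑ j ∈ Finset.Icc 1 k, A i j) ≠ 0) ∧
    (∀ i ∈ Finset.Icc 1 n, ∀ k ∈ Finset.Icc 1 n, ∀ k' ∈ Finset.Icc 1 n,
      (∑ j ∈ Finset.Icc 1 k, A i j) = (∑ j ∈ Finset.Icc 1 k', A i j) → k = k') ∧
    (∀ j ∈ Finset.Icc 1 n, ∀ k ∈ Finset.Icc 1 n,
      (∑ i ∈ Finset.Icc 1 k, A i j) ≠ 0) ∧
    (∀ j ∈ Finset.Icc 1 n, ∀ k ∈ Finset.Icc 1 n, ∀ k' ∈ Finset.Icc 1 n,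
      (∑ i ∈ Finset.Icc 1 k, A i j) = (∑ i ∈ Finset.Icc 1 k', A i j) → k = k') := by
  obtain ⟨a1, a2⟩ := auxCount n hn A hA
  obtain ⟨r1, r2⟩ := auxRow n hn A hA
  obtain ⟨c1, c2⟩ := auxCol n hn A hA
  exact ⟨a1, a2, r1, r2, c1, c2⟩
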